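/- Let n ≥ 0 and let (a_0,…,a_k) be nonnegative integers. For any index i with 1 ≤ i ≤ k−1 such that a_{i-1} ≥ 1 and a_{i+1} ≥ 1, one has Q_n(a_0,…,a_k) = Q_n(a_0,…,a_{i-1} − 1, a_i + 2, a_{i+1} − 1,…,a_k) + Q_n(a_0,…,a_{i-1}, a_i + 1, a_{i+1},…,a_k). -/

import Mathlib

/-- A Dyck path: a finite sequence of ±1 steps with all partial sums nonnegative
and total sum zero. -/
def IsDyckPath (p : List ℤ) : Prop :=
  (∀ s ∈ p, s = 1 ∨ s = -1) ∧ (∀ k, 0 ≤ (p.take k).sum) ∧ p.sum = 0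

/-- The height of a path: the maximum of its partial sums (0 for the empty path). -/
def pathHeight (p : List ℤ) : ℕ :=
  Finset.sup (Finset.range (p.length + 1)) (fun k => ((p.take k).sum).toNat)

/-- Super-Catalan numbers `T(m,n) = (2m)!(2n)!/(2·m!·n!·(m+n)!)`, as a rational number. -/
def superCatalan (m n : ℕ) : ℚ :=
  ((2 * m).factorial * (2 * n).factorial : ℚ) /
    (2 * m.factorial * n.factorial * (m + n).factorial)

/-- `G n m k`: the number of `m`-tuples of Dyck paths of total length `2n` all of whose
pairwise height differences are at most `k` (this is `0` when `n < 0`). -/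
noncomputable def G (n : ℤ) (m k : ℕ) : ℕ :=
  Nat.card {p : Fin m → List ℤ //
    (∀ i, IsDyckPath (p i)) ∧
    (∑ i, ((p i).length : ℤ)) = 2 * n ∧
    ∀ i j, |(pathHeight (p i) : ℤ) - (pathHeight (p j) : ℤ)| ≤ (k : ℤ)}

/-- The path-height function `P n [a₁,…,aₘ]`: the number of `m`-tuples of Dyck paths
of total length `2n` whose `i`-th path has height `aᵢ`. -/
noncomputable def P (n : ℤ) (a : List ℕ) : ℕ :=
  Nat.card {p : Fin a.length → List ℤ //
    (∀ i, IsDyckPath (p i)) ∧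
    (∑ i, ((p i).length : ℤ)) = 2 * n ∧
    ∀ i, pathHeight (p i) = a.get i}

/-- `Qx n x [a₀,…,a_k]` is `P n` evaluated at `a₀` copies of `x`, `a₁` copies of `x+1`, …,
`a_k` copies of `x+k`. -/
noncomputable def Qx (n : ℤ) (x : ℕ) (a : List ℕ) : ℕ :=
  P n (a.zipIdx.flatMap fun q => List.replicate q.1 (x + q.2))

/-- The grouped path-height function `Q n a = ∑_{x=0}^∞ Qx n x a`. Whenever some entry
of `a` is positive (as in every application below) all terms with `x > n` vanish, since
a Dyck path of height at least `x` has length at least `2x`; so the infinite sum equals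
its truncation at `x = n`. -/
noncomputable def Q (n : ℤ) (a : List ℕ) : ℕ :=
  ∑ x ∈ Finset.range (n.toNat + 1), Qx n x a

namespace DyckAux

lemma card_sigma' {ι : Type*} [Fintype ι] (f : ι → Type*) [∀ i, Finite (f i)] :
    Nat.card (Σ i, f i) = ∑ i, Nat.card (f i) := by
  letI := fun i => Fintype.ofFinite (f i)
  simp [Nat.card_eq_fintype_card, Fintype.card_sigma]

/-- lists with ±1 entries and bounded length form a finite set -/
lemma finite_pm (N : ℕ) :
    {l : List ℤ | (∀ s ∈ l, s = 1 ∨ s = -1) ∧ l.length ≤ N}.Finite := by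
  induction N with
  | zero =>
    apply Set.Finite.subset (Set.finite_singleton ([] : List ℤ))
    rintro l ⟨-, hl⟩
    simp_all [List.length_eq_zero_iff.mp (Nat.le_zero.mp hl)]
  | succ N ih =>
    apply Set.Finite.subset
      (((ih.image (fun l => (1 : ℤ) :: l)).union (ih.image (fun l => (-1 : ℤ) :: l))).union
        (Set.finite_singleton ([] : List ℤ)))
    rintro l ⟨h1, hl⟩
    rcases l with _ | ⟨a, t⟩
    · simp
    · rcases h1 a (by simp) with rfl | rfl
      · exact Or.inl (Or.inl ⟨t, ⟨fun s hs => h1 s (by simp [hs]), by simpa using hl⟩, rfl⟩)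
      · exact Or.inl (Or.inr ⟨t, ⟨fun s hs => h1 s (by simp [hs]), by simpa using hl⟩, rfl⟩)

lemma finite_sub {Pr : List ℤ → Prop} (N : ℕ)
    (hP : ∀ l, Pr l → (∀ s ∈ l, s = 1 ∨ s = -1) ∧ l.length ≤ N) :
    Finite {p : List ℤ // Pr p} := by
  haveI : Finite {l : List ℤ // (∀ s ∈ l, s = 1 ∨ s = -1) ∧ l.length ≤ N} :=
    (finite_pm N).to_subtype
  exact Finite.of_injective
    (fun q : {p : List ℤ // Pr p} =>
      (⟨q.1, hP q.1 q.2⟩ : {l : List ℤ // (∀ s ∈ l, s = 1 ∨ s = -1) ∧ l.length ≤ N}))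
    (fun a b hab => Subtype.ext (by injection hab))

instance finite_single (m h : ℕ) :
    Finite {p : List ℤ // IsDyckPath p ∧ p.length = m ∧ pathHeight p = h} :=
  finite_sub m (fun l hl => ⟨hl.1.1, le_of_eq hl.2.1⟩)

instance finite_single_lt (m h : ℕ) :
    Finite {p : List ℤ // IsDyckPath p ∧ p.length = m ∧ pathHeight p < h} :=
  finite_sub m (fun l hl => ⟨hl.1.1, le_of_eq hl.2.1⟩)

lemma dyck_nil : IsDyckPath [] := ⟨by simp, by simp, by simp⟩

lemma pathHeight_nil : pathHeight ([] : List ℤ) = 0 := by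
  simp [pathHeight]

lemma sum_take_q {q : List ℤ} (j : ℕ) :
    (((1 : ℤ) :: q).take (j + 1)).sum = 1 + (q.take j).sum := by
  rw [List.take_cons (by omega)]
  simp

lemma head_one {p : List ℤ} (hp : IsDyckPath p) (hne : p ≠ []) : ∃ q, p = 1 :: q := by
  rcases p with _ | ⟨a, q⟩
  · exact absurd rfl hne
  · have h1 := hp.2.1 1
    have h2 : ((a :: q).take 1).sum = a := by simp
    rcases hp.1 a (by simp) with rfl | rfl
    · exact ⟨q, rfl⟩
    · rw [h2] at h1; omega

lemma exists_decomp {p : List ℤ} (hp : IsDyckPath p) (hne : p ≠ []) :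
    ∃ A B, IsDyckPath A ∧ IsDyckPath B ∧ p = 1 :: A ++ -1 :: B := by
  classical
  obtain ⟨q, rfl⟩ := head_one hp hne
  have hT : ∃ k, 1 ≤ k ∧ (((1:ℤ) :: q).take k).sum = 0 :=
    ⟨(1 :: q).length, by simp, by rw [List.take_length]; exact hp.2.2⟩
  set p : List ℤ := 1 :: q with hpdef
  let k := Nat.find hT
  have hk1 : 1 ≤ k := (Nat.find_spec hT).1
  have hk0 : (p.take k).sum = 0 := (Nat.find_spec hT).2
  have hkle : k ≤ p.length := by
    by_contra hcon
    push_neg at hcon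
    rw [List.take_of_length_le (le_of_lt hcon)] at hk0
    have : k ≤ p.length := Nat.find_le ⟨by simp [hpdef], by rw [List.take_length]; exact hp.2.2⟩
    omega
  have hmin : ∀ j, 1 ≤ j → j < k → 1 ≤ (p.take j).sum := by
    intro j h1 h2
    have hnm := Nat.find_min hT h2
    have hge := hp.2.1 j
    by_contra hcon
    push_neg at hcon
    exact hnm ⟨h1, by omega⟩
  have hk2 : 2 ≤ k := by
    by_contra hcon
    push_neg at hcon
    have hk1' : k = 1 := by omega
    rw [hk1'] at hk0
    have : (p.take 1).sum = 1 := by simp [hpdef]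
    omega
  have hqlen : q.length = p.length - 1 := by simp [hpdef]
  have hklen : k - 1 ≤ q.length := by omega
  -- prefix sum at k-1 is 1 and the (k-1)-th element is -1
  have hstep : (p.take k).sum = (p.take (k-1)).sum + p[k-1]'(by omega) := by
    have h := List.sum_take_succ p (k-1) (by omega)
    rw [show k - 1 + 1 = k by omega] at h
    exact h
  have hsk1 : 1 ≤ (p.take (k-1)).sum := hmin (k-1) (by omega) (by omega)
  have hpm := hp.1 (p[k-1]'(by omega)) (List.getElem_mem _)
  have hgetm : p[k-1]'(by omega) = -1 := by rcases hpm with h | h <;> omega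
  have hsum1 : (p.take (k-1)).sum = 1 := by omega
  -- q's element at k-2
  have hq2 : k - 2 < q.length := by omega
  have hqget : q[k-2]'hq2 = -1 := by
    have : p[k-1]'(by omega) = q[k-2]'hq2 := by
      have : k - 1 = (k-2) + 1 := by omega
      simp [hpdef, this]
    omega
  refine ⟨q.take (k-2), q.drop (k-1), ?_, ?_, ?_⟩
  · -- A = q.take (k-2) is Dyck
    have hsA : ∀ i, i ≤ k - 2 → ((q.take i).sum) = (p.take (i+1)).sum - 1 := by
      intro i hi
      rw [hpdef, sum_take_q]
      ring
    refine ⟨?_, ?_, ?_⟩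
    · intro s hs
      exact hp.1 s (by simp [hpdef]; right; exact List.mem_of_mem_take hs)
    · intro j
      rw [List.take_take]
      have hle : j ⊓ (k-2) ≤ k - 2 := inf_le_right
      rw [hsA _ hle]
      have : 1 ≤ (p.take (j ⊓ (k-2) + 1)).sum := by
        rcases Nat.lt_or_ge (j ⊓ (k-2) + 1) k with h | h
        · exact hmin _ (by omega) h
        · have : j ⊓ (k-2) + 1 = k := by omega
          omega
      omega
    · have hlen : (q.take (k-2)).length = k - 2 := by
        rw [List.length_take]; omega
      have := hsA (k-2) le_rfl
      rw [← List.take_length (l := q.take (k-2)), hlen, List.take_take]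
      rw [show (k-2) ⊓ (k-2) = k - 2 by simp, hsA _ le_rfl,
        show k - 2 + 1 = k - 1 by omega, hsum1]
      ring
  · -- B = q.drop (k-1) is Dyck
    have hBp : q.drop (k-1) = p.drop k := by
      rw [hpdef, show k = (k-1) + 1 by omega]
      simp
    have hsB : ∀ j, ((q.drop (k-1)).take j).sum = (p.take (k + j)).sum := by
      intro j
      rw [hBp, List.take_add, List.sum_append, hk0]
      ring
    refine ⟨?_, ?_, ?_⟩
    · intro s hs
      exact hp.1 s (by simp [hpdef]; right; exact List.mem_of_mem_drop hs)
    · intro j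
      rw [hsB]
      exact hp.2.1 _
    · have h1 : (q.drop (k-1)).length = p.length - k := by
        rw [hBp, List.length_drop]
      rw [← List.take_length (l := q.drop (k-1)), h1, hsB]
      rw [show k + (p.length - k) = p.length by omega, List.take_length]
      exact hp.2.2
  · -- the decomposition equation
    have : q = q.take (k-2) ++ -1 :: q.drop (k-1) := by
      conv_lhs => rw [← List.take_append_drop (k-2) q]
      rw [List.drop_eq_getElem_cons hq2, hqget, show k - 2 + 1 = k - 1 by omega]
    rw [hpdef]
    exact congrArg (List.cons 1) this

lemma sum_take_decomp_low {A B : List ℤ} {j : ℕ} (hj : j ≤ A.length) :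
    (((1:ℤ) :: (A ++ -1 :: B)).take (j+1)).sum = 1 + (A.take j).sum := by
  rw [sum_take_q, List.take_append, Nat.sub_eq_zero_of_le hj]
  simp

lemma sum_take_decomp_high {A B : List ℤ} (hA : IsDyckPath A) (j : ℕ) :
    (((1:ℤ) :: (A ++ -1 :: B)).take (A.length + 2 + j)).sum = (B.take j).sum := by
  rw [show A.length + 2 + j = (A.length + 1 + j) + 1 by omega, sum_take_q,
    List.take_append, List.take_of_length_le (by omega),
    show A.length + 1 + j - A.length = j + 1 by omega, List.take_cons (by omega)]
  simp [List.sum_append, hA.2.2]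

lemma le_pathHeight (p : List ℤ) {k : ℕ} (hk : k ≤ p.length) :
    ((p.take k).sum).toNat ≤ pathHeight p :=
  Finset.le_sup (f := fun k => ((p.take k).sum).toNat) (Finset.mem_range.mpr (by omega))

lemma exists_pathHeight (p : List ℤ) :
    ∃ k, k ≤ p.length ∧ pathHeight p = ((p.take k).sum).toNat := by
  obtain ⟨k, hk, he⟩ := Finset.exists_mem_eq_sup (Finset.range (p.length + 1))
    ⟨0, by simp⟩ (fun k => ((p.take k).sum).toNat)
  rw [Finset.mem_range] at hk
  exact ⟨k, by omega, he⟩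

lemma pathHeight_le {p : List ℤ} {M : ℕ}
    (h : ∀ k, k ≤ p.length → ((p.take k).sum).toNat ≤ M) : pathHeight p ≤ M :=
  Finset.sup_le fun k hk => h k (by rw [Finset.mem_range] at hk; omega)

lemma height_decomp {A B : List ℤ} (hA : IsDyckPath A) (hB : IsDyckPath B) :
    pathHeight (1 :: (A ++ -1 :: B)) = max (pathHeight A + 1) (pathHeight B) := by
  set p := (1:ℤ) :: (A ++ -1 :: B) with hp
  have hplen : p.length = A.length + B.length + 2 := by simp [hp]; omega
  apply le_antisymm
  · apply pathHeight_le
    intro k hk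
    rcases Nat.eq_zero_or_pos k with rfl | hk0
    · simp
    rcases Nat.lt_or_ge k (A.length + 2) with hlow | hhigh
    · obtain ⟨j, rfl⟩ : ∃ j, k = j + 1 := ⟨k - 1, by omega⟩
      have hj : j ≤ A.length := by omega
      rw [hp, sum_take_decomp_low hj, Int.toNat_add (by norm_num) (hA.2.1 j)]
      have h2 := le_pathHeight A hj
      refine le_trans ?_ (le_max_left (pathHeight A + 1) (pathHeight B))
      simp only [Int.toNat_one]
      omega
    · obtain ⟨j, rfl⟩ : ∃ j, k = A.length + 2 + j := ⟨k - (A.length+2), by omega⟩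
      have hj : j ≤ B.length := by omega
      rw [hp, sum_take_decomp_high hA j]
      exact le_trans (le_pathHeight B hj) (le_max_right (pathHeight A + 1) (pathHeight B))
  · apply max_le
    · obtain ⟨j, hj, hje⟩ := exists_pathHeight A
      have h1 : pathHeight A + 1 = (((p.take (j+1)).sum)).toNat := by
        rw [hp, sum_take_decomp_low hj, Int.toNat_add (by norm_num) (hA.2.1 j), hje]
        simp only [Int.toNat_one]
        omega
      rw [h1]
      exact le_pathHeight p (by omega)
    · obtain ⟨j, hj, hje⟩ := exists_pathHeight B
      have h1 : pathHeight B = (((p.take (A.length + 2 + j)).sum)).toNat := by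
        rw [hp, sum_take_decomp_high hA j, hje]
      rw [h1]
      exact le_pathHeight p (by omega)

lemma decomp_ne_len {A A' B B' : List ℤ} (hA : IsDyckPath A) (hA' : IsDyckPath A')
    (h : A ++ -1 :: B = A' ++ -1 :: B') (hlt : A.length < A'.length) : False := by
  have htake : A = A'.take A.length := by
    have h2 := congrArg (List.take A.length) h
    rw [List.take_append, List.take_append,
      Nat.sub_self, Nat.sub_eq_zero_of_le (le_of_lt hlt), List.take_of_length_le le_rfl] at h2
    simpa using h2
  have hsplit : A' = A ++ A'.drop A.length := by
    conv_lhs => rw [← List.take_append_drop A.length A']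
    rw [← htake]
  rcases hC : A'.drop A.length with _ | ⟨c, C'⟩
  · have := congrArg List.length hC
    simp at this
    omega
  · rw [hsplit, hC] at h
    rw [List.append_assoc] at h
    have h3 := List.append_cancel_left h
    have hc : c = -1 := by
      have := congrArg (fun l => l.head?) h3
      simpa using this.symm
    have h4 : (A'.take (A.length + 1)).sum = -1 := by
      rw [hsplit, hC, hc, List.take_append,
        List.take_of_length_le (show A.length ≤ A.length + 1 by omega),
        show A.length + 1 - A.length = 1 by omega]
      simp [List.sum_append, hA.2.2]
    have := hA'.2.1 (A.length + 1)
    omega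

lemma decomp_inj {A A' B B' : List ℤ} (hA : IsDyckPath A) (hA' : IsDyckPath A')
    (h : A ++ -1 :: B = A' ++ -1 :: B') : A = A' ∧ B = B' := by
  rcases lt_trichotomy A.length A'.length with hl | hl | hl
  · exact absurd (decomp_ne_len hA hA' h hl) (by simp)
  · obtain ⟨h1, h2⟩ := List.append_inj h hl
    exact ⟨h1, by injection h2⟩
  · exact absurd (decomp_ne_len hA' hA h.symm hl) (by simp)

lemma dyck_decomp {A B : List ℤ} (hA : IsDyckPath A) (hB : IsDyckPath B) :
    IsDyckPath (1 :: (A ++ -1 :: B)) := by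
  refine ⟨?_, ?_, ?_⟩
  · intro s hs
    simp only [List.mem_cons, List.mem_append] at hs
    rcases hs with rfl | (h | h)
    · exact Or.inl rfl
    · exact hA.1 s h
    · rcases h with rfl | h
      · exact Or.inr rfl
      · exact hB.1 s h
  · intro k
    rcases Nat.eq_zero_or_pos k with rfl | hk0
    · simp
    rcases Nat.lt_or_ge k (A.length + 2) with hlow | hhigh
    · obtain ⟨j, rfl⟩ : ∃ j, k = j + 1 := ⟨k - 1, by omega⟩
      rw [sum_take_decomp_low (by omega)]
      have := hA.2.1 j
      omega
    · obtain ⟨j, rfl⟩ : ∃ j, k = A.length + 2 + j := ⟨k - (A.length+2), by omega⟩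
      rw [sum_take_decomp_high hA j]
      exact hB.2.1 j
  · simp [List.sum_append, hA.2.2, hB.2.2]

noncomputable def eN (h m : ℕ) : ℕ :=
  Nat.card {p : List ℤ // IsDyckPath p ∧ p.length = m ∧ pathHeight p = h}

noncomputable def cN (h m : ℕ) : ℕ :=
  Nat.card {p : List ℤ // IsDyckPath p ∧ p.length = m ∧ pathHeight p < h}

noncomputable def E (h : ℕ) : PowerSeries ℤ := PowerSeries.mk fun m => (eN h m : ℤ)
noncomputable def C (h : ℕ) : PowerSeries ℤ := PowerSeries.mk fun m => (cN h m : ℤ)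

lemma cN_zero (m : ℕ) : cN 0 m = 0 := by
  rw [cN]
  have : IsEmpty {p : List ℤ // IsDyckPath p ∧ p.length = m ∧ pathHeight p < 0} := by
    constructor; rintro ⟨p, -, -, h⟩; omega
  exact Nat.card_of_isEmpty

lemma cN_len_zero (h : ℕ) : cN (h+1) 0 = 1 := by
  rw [cN, Nat.card_eq_one_iff_unique]
  constructor
  · constructor
    rintro ⟨p, -, hp, -⟩ ⟨q, -, hq, -⟩
    apply Subtype.ext
    show p = q
    rw [List.length_eq_zero_iff.mp hp, List.length_eq_zero_iff.mp hq]
  · exact ⟨⟨[], dyck_nil, by simp, by rw [pathHeight_nil]; omega⟩⟩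

lemma cN_len_one (h : ℕ) : cN h 1 = 0 := by
  rw [cN]
  have : IsEmpty {p : List ℤ // IsDyckPath p ∧ p.length = 1 ∧ pathHeight p < h} := by
    constructor
    rintro ⟨p, hp, hlen, -⟩
    obtain ⟨a, rfl⟩ := List.length_eq_one_iff.mp hlen
    have h1 := hp.2.2
    simp at h1
    rcases hp.1 a (by simp) with rfl | rfl <;> simp_all
  exact Nat.card_of_isEmpty

lemma card_partition {α : Type*} {Pr Qr Rr : α → Prop} [Finite {x : α // Pr x}]
    (hiff : ∀ x, Pr x ↔ Qr x ∨ Rr x) (hdis : ∀ x, ¬(Qr x ∧ Rr x)) :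
    Nat.card {x // Pr x} = Nat.card {x // Qr x} + Nat.card {x // Rr x} := by
  classical
  haveI : Finite {x // Qr x} :=
    Finite.of_injective
      (fun q : {x // Qr x} => (⟨q.1, (hiff q.1).2 (Or.inl q.2)⟩ : {x // Pr x}))
      (fun a b hab => Subtype.ext (by injection hab))
  haveI : Finite {x // Rr x} :=
    Finite.of_injective
      (fun q : {x // Rr x} => (⟨q.1, (hiff q.1).2 (Or.inr q.2)⟩ : {x // Pr x}))
      (fun a b hab => Subtype.ext (by injection hab))
  rw [← Nat.card_sum]
  apply Nat.card_congr
  refine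
    { toFun := fun x => if hq : Qr x.1 then Sum.inl ⟨x.1, hq⟩ else
        Sum.inr ⟨x.1, ((hiff x.1).1 x.2).resolve_left hq⟩,
      invFun := fun s => s.elim (fun q => ⟨q.1, (hiff q.1).2 (Or.inl q.2)⟩)
        (fun r => ⟨r.1, (hiff r.1).2 (Or.inr r.2)⟩),
      left_inv := ?_, right_inv := ?_ }
  · intro x
    by_cases hq : Qr x.1 <;> simp [hq]
  · rintro (q | r)
    · simp [q.2]
    · have : ¬ Qr r.1 := fun hq => hdis r.1 ⟨hq, r.2⟩
      simp [this]

lemma C_succ (h : ℕ) : C (h+1) = C h + E h := by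
  ext m
  simp only [C, E, PowerSeries.coeff_mk, map_add]
  have : cN (h+1) m = cN h m + eN h m := by
    rw [cN, cN, eN]
    apply card_partition
    · rintro p
      constructor
      · rintro ⟨h1, h2, h3⟩
        rcases Nat.lt_succ_iff_lt_or_eq.mp h3 with h4 | h4
        · exact Or.inl ⟨h1, h2, h4⟩
        · exact Or.inr ⟨h1, h2, h4⟩
      · rintro (⟨h1, h2, h3⟩ | ⟨h1, h2, h3⟩)
        · exact ⟨h1, h2, by omega⟩
        · exact ⟨h1, h2, by omega⟩
    · rintro p ⟨⟨-, -, h1⟩, ⟨-, -, h2⟩⟩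
      omega
  rw [this]
  push_cast
  ring

lemma card_rec (h m : ℕ) :
    cN (h+1) (m+2) = ∑ j ∈ Finset.range (m+1), cN h j * cN (h+1) (m - j) := by
  classical
  have key : Nat.card {p : List ℤ // IsDyckPath p ∧ p.length = m+2 ∧ pathHeight p < h+1}
      = Nat.card (Σ j : Fin (m+1),
        {A : List ℤ // IsDyckPath A ∧ A.length = (j:ℕ) ∧ pathHeight A < h} ×
        {B : List ℤ // IsDyckPath B ∧ B.length = m - (j:ℕ) ∧ pathHeight B < h+1}) := by
    apply Eq.symm
    apply Nat.card_eq_of_bijective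
      (f := fun z => ⟨1 :: (z.2.1.1 ++ -1 :: z.2.2.1), by
        obtain ⟨j, ⟨A, hA, hAlen, hAht⟩, ⟨B, hB, hBlen, hBht⟩⟩ := z
        refine ⟨dyck_decomp hA hB, by simp; omega, ?_⟩
        rw [height_decomp hA hB]
        have := j.2
        exact max_lt (by omega) (by omega)⟩)
    constructor
    · rintro ⟨j, ⟨A, hA, hAlen, hAht⟩, ⟨B, hB, hBlen, hBht⟩⟩
        ⟨j', ⟨A', hA', hAlen', hAht'⟩, ⟨B', hB', hBlen', hBht'⟩⟩ heq
      have hval : (1:ℤ) :: (A ++ -1 :: B) = 1 :: (A' ++ -1 :: B') := by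
        injection heq
      have hlist : A ++ -1 :: B = A' ++ -1 :: B' := by injection hval
      obtain ⟨rfl, rfl⟩ := decomp_inj hA hA' hlist
      have : j = j' := Fin.ext (by omega)
      subst this
      rfl
    · rintro ⟨p, hp, hlen, hht⟩
      obtain ⟨A, B, hA, hB, hdec⟩ := exists_decomp hp (by
        intro hc; rw [hc] at hlen; simp at hlen)
      have hd2 : p = 1 :: (A ++ -1 :: B) := hdec
      have hlens : A.length + B.length + 2 = m + 2 := by
        rw [hd2] at hlen; simp at hlen; omega
      have hh := hht
      rw [hd2, height_decomp hA hB] at hh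
      refine ⟨⟨⟨A.length, by omega⟩, ⟨A, hA, rfl, by simp at hh; omega⟩,
        ⟨B, hB, by simp; omega, by simp at hh; omega⟩⟩, ?_⟩
      exact Subtype.ext hd2.symm
  rw [cN, key, card_sigma']
  rw [← Fin.sum_univ_eq_sum_range (fun j => cN h j * cN (h+1) (m - j)) (m+1)]
  congr 1
  funext j
  rw [Nat.card_prod]
  rfl

lemma C_rec (h : ℕ) : C (h+1) = 1 + C h * C (h+1) * PowerSeries.X^2 := by
  ext m
  simp only [map_add, PowerSeries.coeff_one, PowerSeries.coeff_mul_X_pow']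
  rcases m with _ | _ | m
  · simp [C, PowerSeries.coeff_mk, cN_len_zero]
  · simp [C, PowerSeries.coeff_mk, cN_len_one]
  · have h2 : (2:ℕ) ≤ m + 2 := by omega
    rw [if_neg (by omega), if_pos h2]
    simp only [C, PowerSeries.coeff_mk, PowerSeries.coeff_mul, zero_add]
    rw [show m + 2 - 2 = m by omega, card_rec h m,
      Finset.Nat.sum_antidiagonal_eq_sum_range_succ_mk]
    push_cast
    rfl

lemma E_step (h : ℕ) : E (h+1) = C (h+1) * C (h+2) * E h * PowerSeries.X^2 := by
  have r1 := C_rec h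
  have r2 := C_rec (h+1)
  have e1 := C_succ h
  have e2 := C_succ (h+1)
  linear_combination (C (h+1)) * r2 - (C (h+2)) * r1
    + (C (h+1) * C (h+2) * PowerSeries.X^2) * e1 - e2

lemma E_core (g : ℕ) :
    E g * E (g+2) = E (g+1)^2 + E g * E (g+1) * E (g+2) := by
  have s1 := E_step g
  have s2 := E_step (g+1)
  have r2 := C_rec (g+2)
  have fact : C (g+3) = C (g+1)
      + PowerSeries.X^2 * C (g+1) * C (g+2) * C (g+3) * E g := by
    linear_combination C_succ (g+2) + C_succ (g+1) + s2 - E (g+1) * r2 + C (g+3) * s1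
  rw [s2, s1]
  linear_combination (PowerSeries.X^2 * PowerSeries.X^2 * C (g+1) * C (g+2)^2 * E g^2) * fact

lemma E_pow_identity (g b' cc d' : ℕ) (U V : PowerSeries ℤ) :
    U * (E g ^ (b'+1) * (E (g+1) ^ cc * (E (g+2) ^ (d'+1) * V))) =
      U * (E g ^ b' * (E (g+1) ^ (cc+2) * (E (g+2) ^ d' * V))) +
      U * (E g ^ (b'+1) * (E (g+1) ^ (cc+1) * (E (g+2) ^ (d'+1) * V))) := by
  have hc := E_core g
  have h1 : U * (E g ^ (b'+1) * (E (g+1) ^ cc * (E (g+2) ^ (d'+1) * V)))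
      = (U * V * E g ^ b' * E (g+1) ^ cc * E (g+2) ^ d') * (E g * E (g+2)) := by
    rw [pow_succ, pow_succ]; ring
  have h0 : U * (E g ^ b' * (E (g+1) ^ (cc+2) * (E (g+2) ^ d' * V)))
      = (U * V * E g ^ b' * E (g+1) ^ cc * E (g+2) ^ d') * (E (g+1) ^ 2) := by
    rw [pow_add]; ring
  have h2 : U * (E g ^ (b'+1) * (E (g+1) ^ (cc+1) * (E (g+2) ^ (d'+1) * V)))
      = (U * V * E g ^ b' * E (g+1) ^ cc * E (g+2) ^ d')
        * (E g * E (g+1) * E (g+2)) := by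
    rw [pow_succ, pow_succ, pow_succ]; ring
  rw [h1, h0, h2]
  rw [hc]
  ring

noncomputable def Pc (N : ℕ) (a : List ℕ) : ℕ :=
  Nat.card {p : Fin a.length → List ℤ //
    (∀ i, IsDyckPath (p i)) ∧ (∑ i, ((p i).length : ℤ)) = (N : ℤ) ∧
    ∀ i, pathHeight (p i) = a.get i}

lemma finite_tuple {k N : ℕ} {Cond : (Fin k → List ℤ) → Prop}
    (h : ∀ p, Cond p → ∀ i, (∀ s ∈ p i, s = 1 ∨ s = -1) ∧ (p i).length ≤ N) :
    Finite {p : Fin k → List ℤ // Cond p} := by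
  haveI : Finite {l : List ℤ // (∀ s ∈ l, s = 1 ∨ s = -1) ∧ l.length ≤ N} :=
    (finite_pm N).to_subtype
  apply Finite.of_injective
    (β := Fin k → {l : List ℤ // (∀ s ∈ l, s = 1 ∨ s = -1) ∧ l.length ≤ N})
    (fun q => fun i => ⟨q.1 i, h q.1 q.2 i⟩)
  intro a b hab
  apply Subtype.ext
  funext i
  exact congrArg Subtype.val (congrFun hab i)

lemma len_le {k : ℕ} (p : Fin k → List ℤ) {N : ℕ}
    (h : (∑ i, ((p i).length : ℤ)) = (N : ℤ)) (i : Fin k) : (p i).length ≤ N := by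
  have h1 : ((p i).length : ℤ) ≤ ∑ j, ((p j).length : ℤ) :=
    Finset.single_le_sum (f := fun j => ((p j).length : ℤ))
      (fun j _ => by positivity) (Finset.mem_univ i)
  rw [h] at h1
  exact_mod_cast h1

instance finite_Pc (N : ℕ) (a : List ℕ) :
    Finite {p : Fin a.length → List ℤ //
      (∀ i, IsDyckPath (p i)) ∧ (∑ i, ((p i).length : ℤ)) = (N : ℤ) ∧
      ∀ i, pathHeight (p i) = a.get i} :=
  finite_tuple (N := N) (fun p hp i => ⟨(hp.1 i).1, len_le p hp.2.1 i⟩)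

lemma Pc_nil (N : ℕ) : Pc N [] = if N = 0 then 1 else 0 := by
  rcases Nat.eq_zero_or_pos N with rfl | hN
  · rw [if_pos rfl, Pc, Nat.card_eq_one_iff_unique]
    constructor
    · constructor
      rintro ⟨p, -⟩ ⟨q, -⟩
      apply Subtype.ext
      funext i
      exact i.elim0
    · exact ⟨⟨fun i => i.elim0, fun i => i.elim0, by simp, fun i => i.elim0⟩⟩
  · rw [if_neg (by omega), Pc]
    have : IsEmpty {p : Fin ([] : List ℕ).length → List ℤ //
        (∀ i, IsDyckPath (p i)) ∧ (∑ i, ((p i).length : ℤ)) = (N : ℤ) ∧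
        ∀ i, pathHeight (p i) = ([] : List ℕ).get i} := by
      constructor
      rintro ⟨p, -, h2, -⟩
      rw [show (∑ i, ((p i).length : ℤ)) = 0 by simp] at h2
      omega
    exact Nat.card_of_isEmpty

lemma Pc_cons (N : ℕ) (a : ℕ) (t : List ℕ) :
    Pc N (a :: t) = ∑ m ∈ Finset.range (N+1), eN a m * Pc (N - m) t := by
  classical
  have key : Pc N (a :: t) = Nat.card (Σ m : Fin (N+1),
      {q : List ℤ // IsDyckPath q ∧ q.length = (m : ℕ) ∧ pathHeight q = a} ×
      {p : Fin t.length → List ℤ //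
        (∀ i, IsDyckPath (p i)) ∧ (∑ i, ((p i).length : ℤ)) = ((N - (m:ℕ) : ℕ) : ℤ) ∧
        ∀ i, pathHeight (p i) = t.get i}) := by
    rw [Pc]
    apply Eq.symm
    apply Nat.card_eq_of_bijective
      (f := fun z => ⟨Fin.cons z.2.1.1 z.2.2.1, by
        obtain ⟨m, ⟨q, hq1, hq2, hq3⟩, ⟨p, hp1, hp2, hp3⟩⟩ := z
        refine ⟨fun i => ?_, ?_, fun i => ?_⟩
        · refine Fin.cases ?_ ?_ i
          · exact hq1
          · exact fun j => hp1 j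
        · show ∑ i : Fin (t.length + 1),
              (((Fin.cons q p : Fin (t.length+1) → List ℤ) i).length : ℤ) = (N : ℤ)
          rw [Fin.sum_univ_succ]
          simp only [Fin.cons_zero, Fin.cons_succ]
          rw [hp2, hq2]
          have := m.2
          push_cast
          omega
        · refine Fin.cases ?_ ?_ i
          · simpa using hq3
          · intro j
            simpa using hp3 j⟩)
    constructor
    · rintro ⟨m, ⟨q, hq1, hq2, hq3⟩, ⟨p, hp1, hp2, hp3⟩⟩
        ⟨m', ⟨q', hq1', hq2', hq3'⟩, ⟨p', hp1', hp2', hp3'⟩⟩ heq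
      have hval : Fin.cons (α := fun _ => List ℤ) q p = Fin.cons q' p' := by
        injection heq
      have hval' : Fin.cons (α := fun _ : Fin (t.length+1) => List ℤ) q p
          = Fin.cons q' p' := hval
      have hqq : q = q' := by
        have := congrFun hval' 0
        simpa using this
      have hpp : p = p' := by
        funext i
        have := congrFun hval' i.succ
        simpa using this
      subst hqq; subst hpp
      have : m = m' := Fin.ext (by omega)
      subst this
      rfl
    · rintro ⟨p, hp1, hp2, hp3⟩
      set p' : Fin (t.length + 1) → List ℤ := p with hp'
      have hp2' : ∑ i : Fin (t.length + 1), ((p' i).length : ℤ) = (N : ℤ) := hp2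
      rw [Fin.sum_univ_succ] at hp2'
      have hm : (p' 0).length ≤ N := by
        have h0 : (0:ℤ) ≤ ∑ i : Fin t.length, ((p' i.succ).length : ℤ) := by
          positivity
        omega
      have z0 : Fin (t.length + 1) := 0
      refine ⟨⟨⟨(p' 0).length, by omega⟩,
        ⟨p' 0, hp1 (0 : Fin (t.length+1)), rfl, hp3 (0 : Fin (t.length+1))⟩,
        ⟨Fin.tail p', fun i => hp1 i.succ, ?_, fun i => hp3 i.succ⟩⟩, ?_⟩
      · show (∑ i : Fin t.length, ((p' i.succ).length : ℤ))
          = (((N - (p' 0).length : ℕ)) : ℤ)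
        push_cast
        omega
      · exact Subtype.ext (Fin.cons_self_tail p')
  rw [key, card_sigma']
  rw [← Fin.sum_univ_eq_sum_range (fun m => eN a m * Pc (N - m) t) (N+1)]
  congr 1
  funext j
  rw [Nat.card_prod]
  rfl

lemma Pc_coeff (l : List ℕ) : ∀ (N : ℕ),
    (Pc N l : ℤ) = PowerSeries.coeff N ((l.map E).prod) := by
  induction l with
  | nil =>
    intro N
    rw [Pc_nil]
    simp only [List.map_nil, List.prod_nil, PowerSeries.coeff_one]
    split_ifs <;> simp
  | cons a t ih =>
    intro N
    rw [Pc_cons, List.map_cons, List.prod_cons, PowerSeries.coeff_mul,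
      Finset.Nat.sum_antidiagonal_eq_sum_range_succ_mk]
    push_cast
    apply Finset.sum_congr rfl
    intro m hm
    rw [ih (N - m)]
    simp [E, PowerSeries.coeff_mk]

noncomputable def offsetProd (x : ℕ) : ℕ → List ℕ → PowerSeries ℤ
  | _, [] => 1
  | o, a :: t => E (x + o) ^ a * offsetProd x (o+1) t

lemma flat_eq (x : ℕ) : ∀ (l : List ℕ) (o : ℕ),
    (((l.zipIdx o).flatMap fun q => List.replicate q.1 (x + q.2)).map E).prod
      = offsetProd x o l := by
  intro l
  induction l with
  | nil => intro o; simp [offsetProd]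
  | cons a t ih =>
    intro o
    rw [List.zipIdx_cons, List.flatMap_cons, List.map_append, List.prod_append, ih (o+1)]
    simp [offsetProd, List.map_replicate, List.prod_replicate]

lemma offsetProd_append (x : ℕ) : ∀ (u v : List ℕ) (o : ℕ),
    offsetProd x o (u ++ v) = offsetProd x o u * offsetProd x (o + u.length) v := by
  intro u
  induction u with
  | nil => intro v o; simp [offsetProd]
  | cons a t ih =>
    intro v o
    show E (x + o) ^ a * offsetProd x (o+1) (t ++ v)
      = E (x + o) ^ a * offsetProd x (o+1) t * offsetProd x (o + (t.length + 1)) v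
    rw [ih v (o+1), show o + 1 + t.length = o + (t.length + 1) by omega]
    ring

lemma offsetProd_cons (x o a : ℕ) (t : List ℕ) :
    offsetProd x o (a :: t) = E (x + o) ^ a * offsetProd x (o+1) t := rfl


lemma P_eq_Pc (n : ℕ) (a : List ℕ) : P (n:ℤ) a = Pc (2*n) a := by
  unfold P Pc
  apply Nat.card_congr
  apply Equiv.subtypeEquivRight
  intro p
  constructor
  · rintro ⟨h1, h2, h3⟩
    exact ⟨h1, by rw [h2]; push_cast; ring, h3⟩
  · rintro ⟨h1, h2, h3⟩
    exact ⟨h1, by rw [h2]; push_cast; ring, h3⟩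

lemma Qx_coeff (n x : ℕ) (a : List ℕ) :
    (Qx (n:ℤ) x a : ℤ) = PowerSeries.coeff (2*n) (offsetProd x 0 a) := by
  unfold Qx
  rw [P_eq_Pc, Pc_coeff, flat_eq x a 0]

end DyckAux

open DyckAux

/-- For `n ≥ 0` and a tuple `(a₀,…,a_k)` written as `l₁ ++ [b, c, d] ++ l₂`,
where `b = a_{i-1} ≥ 1`, `c = aᵢ`, `d = a_{i+1} ≥ 1` for an index `i` with `1 ≤ i ≤ k−1`:
`Q_n(a₀,…,a_k) = Q_n(…, a_{i-1}−1, aᵢ+2, a_{i+1}−1, …) + Q_n(…, a_{i-1}, aᵢ+1, a_{i+1}, …)`. -/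
theorem grouped_splitter_two (n : ℕ) (l₁ l₂ : List ℕ) (b c d : ℕ)
    (hb : 1 ≤ b) (hd : 1 ≤ d) :
    Q (n : ℤ) (l₁ ++ b :: c :: d :: l₂) =
      Q (n : ℤ) (l₁ ++ (b - 1) :: (c + 2) :: (d - 1) :: l₂)
        + Q (n : ℤ) (l₁ ++ b :: (c + 1) :: d :: l₂) := by
  obtain ⟨b', rfl⟩ : ∃ b', b = b' + 1 := ⟨b - 1, by omega⟩
  obtain ⟨d', rfl⟩ : ∃ d', d = d' + 1 := ⟨d - 1, by omega⟩
  unfold Q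
  rw [← Finset.sum_add_distrib]
  apply Finset.sum_congr rfl
  intro x hx
  have key := fun (a : List ℕ) => Qx_coeff n x a
  have main : offsetProd x 0 (l₁ ++ (b'+1) :: c :: (d'+1) :: l₂)
      = offsetProd x 0 (l₁ ++ (b'+1-1) :: (c+2) :: (d'+1-1) :: l₂)
        + offsetProd x 0 (l₁ ++ (b'+1) :: (c+1) :: (d'+1) :: l₂) := by
    simp only [Nat.add_sub_cancel]
    rw [offsetProd_append, offsetProd_append, offsetProd_append]
    simp only [offsetProd_cons, Nat.zero_add]
    rw [show x + (l₁.length + 1) = (x + l₁.length) + 1 by omega,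
      show x + (l₁.length + 1 + 1) = (x + l₁.length) + 2 by omega]
    exact E_pow_identity (x + l₁.length) b' c d' (offsetProd x 0 l₁)
      (offsetProd x (l₁.length+1+1+1) l₂)
  have this2 : (Qx (n:ℤ) x (l₁ ++ (b'+1) :: c :: (d'+1) :: l₂) : ℤ)
      = (Qx (n:ℤ) x (l₁ ++ (b'+1-1) :: (c+2) :: (d'+1-1) :: l₂) : ℤ)
        + (Qx (n:ℤ) x (l₁ ++ (b'+1) :: (c+1) :: (d'+1) :: l₂) : ℤ) := by
    rw [key, key, key, ← map_add, main]
  exact_mod_cast this2
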